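/- Let e ≥ 1 be an integer and q = 3^{2e+1}. The number of edges of the polarity graph GH_q^π equals (q⁶ − q³)/2, i.e., the binomial coefficient C(q³, 2). -/

import Mathlib

/-- The polarity graph `GH_q^π` of the biaffine part of the classical generalized
hexagon, for `q = 3^(2e+1)`: vertices are quintuples `(p₁,p₂,p₃,p₄,p₅)` over `F_q`,
with `p` adjacent to `r` iff they are distinct and
`p₂ + r₄^(3^e) = p₁ r₁^(3^(e+1))`, `p₃ + r₅^(3^e) = p₁² r₁^(3^(e+1))`,
`p₄ + r₂^(3^(e+1)) = p₁³ r₁^(3^(e+1))`, and `p₅ + r₃^(3^(e+1)) = p₁³ r₁^(2·3^(e+1))`. -/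
def GHPolarityGraph (e : ℕ) (F : Type*) [Field F] :
    SimpleGraph (F × F × F × F × F) :=
  SimpleGraph.fromRel (fun p r =>
    p.2.1 + r.2.2.2.1 ^ (3 ^ e) = p.1 * r.1 ^ (3 ^ (e + 1)) ∧
    p.2.2.1 + r.2.2.2.2 ^ (3 ^ e) = p.1 ^ 2 * r.1 ^ (3 ^ (e + 1)) ∧
    p.2.2.2.1 + r.2.1 ^ (3 ^ (e + 1)) = p.1 ^ 3 * r.1 ^ (3 ^ (e + 1)) ∧
    p.2.2.2.2 + r.2.2.1 ^ (3 ^ (e + 1)) = p.1 ^ 3 * r.1 ^ (2 * 3 ^ (e + 1)))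

section Aux

variable {F : Type*} [Field F]

/-- The underlying (symmetric) relation of the polarity graph. -/
def GHRel (e : ℕ) (p r : F × F × F × F × F) : Prop :=
    p.2.1 + r.2.2.2.1 ^ (3 ^ e) = p.1 * r.1 ^ (3 ^ (e + 1)) ∧
    p.2.2.1 + r.2.2.2.2 ^ (3 ^ e) = p.1 ^ 2 * r.1 ^ (3 ^ (e + 1)) ∧
    p.2.2.2.1 + r.2.1 ^ (3 ^ (e + 1)) = p.1 ^ 3 * r.1 ^ (3 ^ (e + 1)) ∧
    p.2.2.2.2 + r.2.2.1 ^ (3 ^ (e + 1)) = p.1 ^ 3 * r.1 ^ (2 * 3 ^ (e + 1))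

/-- Given a first coordinate `a` and a right neighbour `r`, the unique point `p`
with `p.1 = a` and `GHRel e p r`. -/
def GHP (e : ℕ) (a : F) (r : F × F × F × F × F) : F × F × F × F × F :=
  (a,
   a * r.1 ^ (3 ^ (e + 1)) - r.2.2.2.1 ^ (3 ^ e),
   a ^ 2 * r.1 ^ (3 ^ (e + 1)) - r.2.2.2.2 ^ (3 ^ e),
   a ^ 3 * r.1 ^ (3 ^ (e + 1)) - r.2.1 ^ (3 ^ (e + 1)),
   a ^ 3 * r.1 ^ (2 * 3 ^ (e + 1)) - r.2.2.1 ^ (3 ^ (e + 1)))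

lemma GHRel_GHP (e : ℕ) (a : F) (r : F × F × F × F × F) : GHRel e (GHP e a r) r := by
  refine ⟨?_, ?_, ?_, ?_⟩ <;> simp [GHP, sub_add_cancel]

lemma eq_GHP_of_GHRel {e : ℕ} {p r : F × F × F × F × F} (h : GHRel e p r) :
    p = GHP e p.1 r := by
  obtain ⟨h1, h2, h3, h4⟩ := h
  have e1 : p.2.1 = p.1 * r.1 ^ (3 ^ (e + 1)) - r.2.2.2.1 ^ (3 ^ e) := by
    rw [← h1]; ring
  have e2 : p.2.2.1 = p.1 ^ 2 * r.1 ^ (3 ^ (e + 1)) - r.2.2.2.2 ^ (3 ^ e) := by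
    rw [← h2]; ring
  have e3 : p.2.2.2.1 = p.1 ^ 3 * r.1 ^ (3 ^ (e + 1)) - r.2.1 ^ (3 ^ (e + 1)) := by
    rw [← h3]; ring
  have e4 : p.2.2.2.2 = p.1 ^ 3 * r.1 ^ (2 * 3 ^ (e + 1)) - r.2.2.1 ^ (3 ^ (e + 1)) := by
    rw [← h4]; ring
  exact Prod.ext rfl (Prod.ext e1 (Prod.ext e2 (Prod.ext e3 e4)))

variable [Fintype F] [CharP F 3]

section FieldFacts

variable {e : ℕ} (hF : Fintype.card F = 3 ^ (2 * e + 1))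
include hF

lemma GH_powq (x : F) : x ^ (3 : ℕ) ^ (2 * e + 1) = x := by
  rw [← hF]; exact FiniteField.pow_card x

lemma GH_hA (x : F) : (x ^ (3 : ℕ) ^ (e + 1)) ^ (3 : ℕ) ^ e = x := by
  rw [← pow_mul, show 3 ^ (e + 1) * 3 ^ e = 3 ^ (2 * e + 1) by rw [← pow_add]; congr 1; omega]
  exact GH_powq hF x

lemma GH_hB (x : F) : (x ^ (3 : ℕ) ^ e) ^ (3 : ℕ) ^ (e + 1) = x := by
  rw [← pow_mul, show 3 ^ e * 3 ^ (e + 1) = 3 ^ (2 * e + 1) by rw [← pow_add]; congr 1; omega]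
  exact GH_powq hF x

lemma GH_hC (x : F) : (x ^ (3 : ℕ) ^ (e + 1)) ^ (3 : ℕ) ^ (e + 1) = x ^ 3 := by
  rw [← pow_mul, show 3 ^ (e + 1) * 3 ^ (e + 1) = 3 ^ (2 * e + 1) * 3 by
    rw [← pow_add]; rw [show e + 1 + (e + 1) = 2 * e + 1 + 1 by omega]; ring,
    pow_mul, GH_powq hF]

lemma GH_hA2 (x : F) : (x ^ (2 * 3 ^ (e + 1))) ^ (3 : ℕ) ^ e = x ^ 2 := by
  rw [← pow_mul, show 2 * 3 ^ (e + 1) * 3 ^ e = 3 ^ (2 * e + 1) * 2 by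
    rw [mul_assoc, ← pow_add, show e + 1 + e = 2 * e + 1 by omega]; ring,
    pow_mul, GH_powq hF]

lemma GH_hD (x : F) : (x ^ 3) ^ (3 : ℕ) ^ e = x ^ (3 : ℕ) ^ (e + 1) := by
  rw [← pow_mul, show 3 * 3 ^ e = 3 ^ (e + 1) by rw [pow_succ]; ring]

/-- The relation is symmetric over `F_q`, `q = 3^(2e+1)`. -/
lemma GHRel_symm {p r : F × F × F × F × F} (h : GHRel e p r) : GHRel e r p := by
  haveI : Fact (Nat.Prime 3) := ⟨by norm_num⟩
  obtain ⟨h1, h2, h3, h4⟩ := h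
  refine ⟨?_, ?_, ?_, ?_⟩
  · calc r.2.1 + p.2.2.2.1 ^ (3 : ℕ) ^ e
        = (p.2.2.2.1 + r.2.1 ^ (3 : ℕ) ^ (e + 1)) ^ (3 : ℕ) ^ e := by
          rw [add_pow_char_pow, GH_hA hF]; ring
      _ = (p.1 ^ 3 * r.1 ^ (3 : ℕ) ^ (e + 1)) ^ (3 : ℕ) ^ e := by rw [h3]
      _ = r.1 * p.1 ^ (3 : ℕ) ^ (e + 1) := by rw [mul_pow, GH_hA hF, GH_hD hF]; ring
  · calc r.2.2.1 + p.2.2.2.2 ^ (3 : ℕ) ^ e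
        = (p.2.2.2.2 + r.2.2.1 ^ (3 : ℕ) ^ (e + 1)) ^ (3 : ℕ) ^ e := by
          rw [add_pow_char_pow, GH_hA hF]; ring
      _ = (p.1 ^ 3 * r.1 ^ (2 * 3 ^ (e + 1))) ^ (3 : ℕ) ^ e := by rw [h4]
      _ = r.1 ^ 2 * p.1 ^ (3 : ℕ) ^ (e + 1) := by
          rw [mul_pow, GH_hA2 hF, GH_hD hF]; ring
  · calc r.2.2.2.1 + p.2.1 ^ (3 : ℕ) ^ (e + 1)
        = (p.2.1 + r.2.2.2.1 ^ (3 : ℕ) ^ e) ^ (3 : ℕ) ^ (e + 1) := by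
          rw [add_pow_char_pow, GH_hB hF]; ring
      _ = (p.1 * r.1 ^ (3 : ℕ) ^ (e + 1)) ^ (3 : ℕ) ^ (e + 1) := by rw [h1]
      _ = r.1 ^ 3 * p.1 ^ (3 : ℕ) ^ (e + 1) := by rw [mul_pow, GH_hC hF]; ring
  · calc r.2.2.2.2 + p.2.2.1 ^ (3 : ℕ) ^ (e + 1)
        = (p.2.2.1 + r.2.2.2.2 ^ (3 : ℕ) ^ e) ^ (3 : ℕ) ^ (e + 1) := by
          rw [add_pow_char_pow, GH_hB hF]; ring
      _ = (p.1 ^ 2 * r.1 ^ (3 : ℕ) ^ (e + 1)) ^ (3 : ℕ) ^ (e + 1) := by rw [h2]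
      _ = r.1 ^ 3 * p.1 ^ (2 * 3 ^ (e + 1)) := by
          rw [mul_pow, GH_hC hF, ← pow_mul]; ring
end FieldFacts

/-- Parametrization of the loops of the relation. -/
def GHL (e : ℕ) (a u v : F) : F × F × F × F × F :=
  (a, a * a ^ (3 ^ (e + 1)) - u ^ (3 ^ e), a ^ 2 * a ^ (3 ^ (e + 1)) - v ^ (3 ^ e), u, v)

section Loops

variable {e : ℕ} (hF : Fintype.card F = 3 ^ (2 * e + 1))
include hF

lemma GHL_eq_GHP (a u v : F) : GHL e a u v = GHP e a (GHL e a u v) := by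
  haveI : Fact (Nat.Prime 3) := ⟨by norm_num⟩
  refine Prod.ext rfl (Prod.ext rfl (Prod.ext rfl (Prod.ext ?_ ?_)))
  · show u = a ^ 3 * a ^ (3 ^ (e + 1)) - (a * a ^ (3 ^ (e + 1)) - u ^ (3 ^ e)) ^ (3 ^ (e + 1))
    rw [sub_pow_char_pow, mul_pow, GH_hC hF, GH_hB hF]; ring
  · show v = a ^ 3 * a ^ (2 * 3 ^ (e + 1)) -
        (a ^ 2 * a ^ (3 ^ (e + 1)) - v ^ (3 ^ e)) ^ (3 ^ (e + 1))
    rw [sub_pow_char_pow, mul_pow, GH_hC hF, GH_hB hF, ← pow_mul]; ring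

lemma GHRel_GHL (a u v : F) : GHRel e (GHL e a u v) (GHL e a u v) := by
  conv_lhs => rw [GHL_eq_GHP hF]
  exact GHRel_GHP e a (GHL e a u v)

lemma GHL_of_loop {r : F × F × F × F × F} (h : GHRel e r r) :
    GHL e r.1 r.2.2.2.1 r.2.2.2.2 = r := by
  have hp := eq_GHP_of_GHRel h
  refine Prod.ext rfl (Prod.ext ?_ (Prod.ext ?_ (Prod.ext rfl rfl))) <;>
    · conv_rhs => rw [hp]
      rfl

end Loops

end Aux

theorem card_edgeSet_GHPolarityGraph
    (e : ℕ) (he : 1 ≤ e) (q : ℕ) (hq : q = 3 ^ (2 * e + 1))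
    (F : Type*) [Field F] [Fintype F] (hF : Fintype.card F = q) :
    (GHPolarityGraph e F).edgeSet.ncard = (q ^ 6 - q ^ 3) / 2 ∧
    (GHPolarityGraph e F).edgeSet.ncard = Nat.choose (q ^ 3) 2 := by
  classical
  subst hq
  -- characteristic 3
  obtain ⟨p, hc⟩ := CharP.exists F
  haveI := hc
  obtain ⟨n, hp, hcard⟩ := FiniteField.card F p
  have hp3 : p = 3 := by
    have h1 : p ∣ 3 ^ (2 * e + 1) := by
      rw [← hF, hcard]; exact dvd_pow_self p n.pos.ne'
    have h2 : p ∣ 3 := hp.dvd_of_dvd_pow h1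
    exact (Nat.prime_dvd_prime_iff_eq hp (by norm_num)).mp h2
  subst hp3
  haveI : Fact (Nat.Prime 3) := ⟨by norm_num⟩
  set G := GHPolarityGraph e F with hG
  -- adjacency in terms of GHRel
  have hadj : ∀ a b : F × F × F × F × F, G.Adj a b ↔ GHRel e a b ∧ a ≠ b := by
    intro a b
    rw [hG, GHPolarityGraph, SimpleGraph.fromRel_adj]
    constructor
    · rintro ⟨hne, h | h⟩
      · exact ⟨h, hne⟩
      · exact ⟨GHRel_symm hF h, hne⟩
    · rintro ⟨h, hne⟩; exact ⟨hne, Or.inl h⟩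
  -- cardinality of the full relation set
  have hS1 : (Finset.univ.filter
      fun z : (F × F × F × F × F) × (F × F × F × F × F) => GHRel e z.1 z.2).card =
      (3 ^ (2 * e + 1)) ^ 6 := by
    have hb : (Finset.univ.filter
        fun z : (F × F × F × F × F) × (F × F × F × F × F) => GHRel e z.1 z.2).card =
        (Finset.univ : Finset (F × F × F × F × F × F)).card := by
      apply Finset.card_nbij' (fun z => (z.1.1, z.2)) (fun w => (GHP e w.1 w.2, w.2))
      · intro z _; exact Finset.mem_univ _
      · intro w _
        exact Finset.mem_filter.mpr ⟨Finset.mem_univ _, GHRel_GHP e w.1 w.2⟩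
      · intro z hz
        simp only [Finset.mem_coe, Finset.mem_filter] at hz
        show (GHP e z.1.1 z.2, z.2) = z
        rw [← eq_GHP_of_GHRel hz.2]
      · intro w _; rfl
    rw [hb, Finset.card_univ]
    simp only [Fintype.card_prod, hF]
    ring
  -- cardinality of the diagonal (loop) part
  have hS2 : (Finset.univ.filter
      fun z : (F × F × F × F × F) × (F × F × F × F × F) =>
        GHRel e z.1 z.2 ∧ z.1 = z.2).card = (3 ^ (2 * e + 1)) ^ 3 := by
    have hb : (Finset.univ.filter
        fun z : (F × F × F × F × F) × (F × F × F × F × F) =>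
          GHRel e z.1 z.2 ∧ z.1 = z.2).card =
        (Finset.univ : Finset (F × F × F)).card := by
      apply Finset.card_nbij' (fun z => (z.1.1, z.1.2.2.2.1, z.1.2.2.2.2))
        (fun w => (GHL e w.1 w.2.1 w.2.2, GHL e w.1 w.2.1 w.2.2))
      · intro z _; exact Finset.mem_univ _
      · intro w _
        exact Finset.mem_filter.mpr
          ⟨Finset.mem_univ _, GHRel_GHL hF w.1 w.2.1 w.2.2, rfl⟩
      · rintro ⟨z1, z2⟩ hz
        simp only [Finset.mem_coe, Finset.mem_filter] at hz
        obtain ⟨-, hrel, hdiag⟩ := hz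
        have hdiag' : z1 = z2 := hdiag
        subst hdiag'
        have hrel' : GHRel e z1 z1 := hrel
        have hL := GHL_of_loop hF hrel'
        show (GHL e z1.1 z1.2.2.2.1 z1.2.2.2.2, GHL e z1.1 z1.2.2.2.1 z1.2.2.2.2) = (z1, z1)
        rw [hL]
      · intro w _; rfl
    rw [hb, Finset.card_univ]
    simp only [Fintype.card_prod, hF]
    ring
  -- split off the diagonal
  have hsplit : (Finset.univ.filter
      fun z : (F × F × F × F × F) × (F × F × F × F × F) =>
        GHRel e z.1 z.2 ∧ z.1 = z.2).card +
      (Finset.univ.filter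
      fun z : (F × F × F × F × F) × (F × F × F × F × F) =>
        GHRel e z.1 z.2 ∧ ¬ z.1 = z.2).card =
      (Finset.univ.filter
      fun z : (F × F × F × F × F) × (F × F × F × F × F) => GHRel e z.1 z.2).card := by
    rw [← Finset.filter_filter, ← Finset.filter_filter]
    exact Finset.card_filter_add_card_filter_not _
  -- edge count via darts
  letI : DecidableRel G.Adj := fun a b => Classical.propDecidable _
  have h2m := SimpleGraph.two_mul_card_edgeFinset (G := G)
  have hfeq : (Finset.univ.filter fun (x, y) => G.Adj x y) =
      (Finset.univ.filter
      fun z : (F × F × F × F × F) × (F × F × F × F × F) =>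
        GHRel e z.1 z.2 ∧ ¬ z.1 = z.2) := by
    apply Finset.filter_congr
    rintro ⟨x, y⟩ -
    exact hadj x y
  rw [hfeq] at h2m
  have hkey : 2 * G.edgeFinset.card = (3 ^ (2 * e + 1)) ^ 6 - (3 ^ (2 * e + 1)) ^ 3 := by
    omega
  have hn : G.edgeSet.ncard = G.edgeFinset.card := Set.ncard_eq_toFinset_card' _
  have hq1 : 1 ≤ (3 ^ (2 * e + 1)) ^ 3 := Nat.one_le_pow _ _ (by positivity)
  obtain ⟨m, hm⟩ : ∃ m, (3 ^ (2 * e + 1)) ^ 3 = m + 1 := ⟨(3 ^ (2 * e + 1)) ^ 3 - 1, by omega⟩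
  have h6 : (3 ^ (2 * e + 1)) ^ 6 = (m + 1) * m + (m + 1) := by
    have h66 : (3 ^ (2 * e + 1)) ^ 6 = (3 ^ (2 * e + 1)) ^ 3 * (3 ^ (2 * e + 1)) ^ 3 := by ring
    rw [h66, hm]; ring
  have hsub : (3 ^ (2 * e + 1)) ^ 6 - (3 ^ (2 * e + 1)) ^ 3 =
      (3 ^ (2 * e + 1)) ^ 3 * ((3 ^ (2 * e + 1)) ^ 3 - 1) := by
    rw [h6, hm, Nat.add_sub_cancel, Nat.add_sub_cancel]
  have h1 : ((3 ^ (2 * e + 1)) ^ 6 - (3 ^ (2 * e + 1)) ^ 3) / 2 = G.edgeFinset.card := by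
    rw [← hkey, Nat.mul_div_cancel_left _ (by norm_num : 0 < 2)]
  refine ⟨by rw [hn, h1], ?_⟩
  rw [hn, ← h1, Nat.choose_two_right, ← hsub]
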